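/- Let p ≥ 2 be even and x ∈ ℝ. As T → ∞, (1/π)∫₀^T cos(u^{p+1}/(p+1) + xu) du converges to Ai_p(x), with error term O(T^{-p}): specifically |Ai_p(x) - (1/π)∫₀^T cos(u^{p+1}/(p+1)+xu) du| ≤ C_x / T^p for T > (C|x|)^{1/p} and some constant C_x depending on x. -/

import Mathlib

open Real Filter intervalIntegral

lemma phi_deriv (p : ℕ) (x t : ℝ) :
    HasDerivAt (fun u : ℝ => u ^ (p + 1) / (p + 1) + x * u) (t ^ p + x) t := by
  have h1 := (hasDerivAt_pow (p + 1) t).div_const ((p:ℝ) + 1)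
  have h2 : HasDerivAt (fun u : ℝ => x * u) x t := by
    simpa using (hasDerivAt_id t).const_mul x
  have h3 := h1.add h2
  have hne : ((p:ℝ) + 1) ≠ 0 := by positivity
  refine h3.congr_deriv ?_
  push_cast
  field_simp

lemma tail_bound (p : ℕ) (hp : 2 ≤ p) (x a b : ℝ)
    (ha : (2 * |x|) ^ ((1:ℝ)/p) < a) (hab : a ≤ b) :
    |∫ u in a..b, Real.cos (u ^ (p + 1) / (p + 1) + x * u)| ≤ 8 / a ^ p := by
  have hp0 : (p:ℝ) ≠ 0 := by positivity
  have ha0 : 0 < a := lt_of_le_of_lt (Real.rpow_nonneg (by positivity) _) ha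
  -- 2|x| < a^p
  have hax : 2 * |x| < a ^ p := by
    have h1 : ((2 * |x|) ^ ((1:ℝ)/p)) ^ p < a ^ p :=
      pow_lt_pow_left₀ ha (Real.rpow_nonneg (by positivity) _) (by omega)
    calc 2 * |x| = ((2 * |x|) ^ ((1:ℝ)/p)) ^ p := by
          rw [← Real.rpow_natCast ((2*|x|) ^ ((1:ℝ)/p)) p, ← Real.rpow_mul (by positivity)]
          rw [one_div, inv_mul_cancel₀ hp0, Real.rpow_one]
      _ < a ^ p := h1
  -- lower bound on the phase derivative
  have hlow : ∀ t ∈ Set.Icc a b, t ^ p / 2 ≤ t ^ p + x ∧ 0 < t ^ p + x := by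
    intro t ht
    have ht0 : 0 < t := lt_of_lt_of_le ha0 ht.1
    have htp : a ^ p ≤ t ^ p := pow_le_pow_left₀ ha0.le ht.1 p
    have hx : |x| < t ^ p / 2 := by nlinarith [abs_nonneg x]
    constructor
    · nlinarith [abs_le.mp (le_refl |x|), neg_abs_le x]
    · nlinarith [neg_abs_le x, pow_pos ht0 p]
  set φ : ℝ → ℝ := fun u => u ^ (p + 1) / (p + 1) + x * u with hφ
  set f : ℝ → ℝ := fun t => (t ^ p + x)⁻¹ with hf
  set f' : ℝ → ℝ := fun t => -(↑p * t ^ (p - 1)) / (t ^ p + x) ^ 2 with hf'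
  set v : ℝ → ℝ := fun t => Real.sin (φ t) with hv
  set v' : ℝ → ℝ := fun t => Real.cos (φ t) * (t ^ p + x) with hv'
  have hIcc : Set.uIcc a b = Set.Icc a b := Set.uIcc_of_le hab
  have hne : ∀ t ∈ Set.Icc a b, t ^ p + x ≠ 0 := fun t ht => (hlow t ht).2.ne'
  have hdu : ∀ t ∈ Set.uIcc a b, HasDerivAt f (f' t) t := by
    intro t ht
    rw [hIcc] at ht
    exact ((hasDerivAt_pow p t).add_const x).inv (hne t ht)
  have hdv : ∀ t ∈ Set.uIcc a b, HasDerivAt v (v' t) t := fun t _ => (phi_deriv p x t).sin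
  have hcf' : ContinuousOn f' (Set.Icc a b) := by
    apply ContinuousOn.div
    · fun_prop
    · fun_prop
    · intro t ht; exact pow_ne_zero 2 (hne t ht)
  have hcv' : ContinuousOn v' (Set.Icc a b) := by fun_prop
  have hcv : Continuous v := by fun_prop
  have hif' : IntervalIntegrable f' MeasureTheory.volume a b := by
    rw [intervalIntegrable_iff_integrableOn_Icc_of_le hab]
    exact hcf'.integrableOn_Icc
  have hiv' : IntervalIntegrable v' MeasureTheory.volume a b := by
    rw [intervalIntegrable_iff_integrableOn_Icc_of_le hab]
    exact hcv'.integrableOn_Icc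
  have hibp := integral_mul_deriv_eq_deriv_mul hdu hdv hif' hiv'
  have hcong : ∫ u in a..b, Real.cos (φ u) = ∫ t in a..b, f t * v' t := by
    apply integral_congr
    intro t ht
    rw [hIcc] at ht
    simp only [hf, hv']
    field_simp [hne t ht]
  -- boundary bounds
  have hap : 0 < a ^ p := pow_pos ha0 p
  have hbd : ∀ t ∈ Set.Icc a b, |f t * v t| ≤ 2 / a ^ p := by
    intro t ht
    have h1 := (hlow t ht).1
    have h2 := (hlow t ht).2
    have htp : a ^ p ≤ t ^ p := pow_le_pow_left₀ ha0.le ht.1 p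
    have h3 : a ^ p / 2 ≤ t ^ p + x := by linarith
    have h4 : f t ≤ 2 / a ^ p := by
      have := inv_anti₀ (by positivity : (0:ℝ) < a ^ p / 2) h3
      calc f t = (t ^ p + x)⁻¹ := rfl
        _ ≤ (a ^ p / 2)⁻¹ := this
        _ = 2 / a ^ p := by field_simp
    calc |f t * v t| = |f t| * |v t| := abs_mul _ _
      _ ≤ (2 / a ^ p) * 1 := by
          apply mul_le_mul _ (Real.abs_sin_le_one _) (abs_nonneg _) (by positivity)
          rwa [abs_of_pos (inv_pos.mpr h2)]
      _ = 2 / a ^ p := mul_one _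
  -- remainder bound via explicit antiderivative
  set g : ℝ → ℝ := fun t => 4 * (↑p * t ^ (p - 1)) / (t ^ p) ^ 2 with hg
  have hgd : ∀ t ∈ Set.uIcc a b, HasDerivAt (fun s : ℝ => -4 * (s ^ p)⁻¹) (g t) t := by
    intro t ht
    rw [hIcc] at ht
    have ht0 : t ≠ 0 := (lt_of_lt_of_le ha0 ht.1).ne'
    have := ((hasDerivAt_pow p t).inv (pow_ne_zero p ht0)).const_mul (-4 : ℝ)
    refine this.congr_deriv ?_
    rw [hg]
    field_simp
  have hcg : ContinuousOn g (Set.Icc a b) := by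
    apply ContinuousOn.div
    · fun_prop
    · fun_prop
    · intro t ht
      have ht0 : t ≠ 0 := (lt_of_lt_of_le ha0 ht.1).ne'
      positivity
  have hig : IntervalIntegrable g MeasureTheory.volume a b := by
    rw [intervalIntegrable_iff_integrableOn_Icc_of_le hab]
    exact hcg.integrableOn_Icc
  have hgint : ∫ t in a..b, g t = -4 * (b ^ p)⁻¹ - -4 * (a ^ p)⁻¹ :=
    integral_eq_sub_of_hasDerivAt hgd hig
  have hptw : ∀ t ∈ Set.Icc a b, |f' t| * |v t| ≤ g t := by
    intro t ht
    have ht0 : 0 < t := lt_of_lt_of_le ha0 ht.1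
    have h1 := (hlow t ht).1
    have h2 := (hlow t ht).2
    have htpp : 0 < t ^ p := pow_pos ht0 p
    have hnum : (0:ℝ) ≤ ↑p * t ^ (p - 1) := by positivity
    calc |f' t| * |v t|
        ≤ |f' t| * 1 := mul_le_mul_of_nonneg_left (Real.abs_sin_le_one _) (abs_nonneg _)
      _ = (↑p * t ^ (p - 1)) / (t ^ p + x) ^ 2 := by
          rw [mul_one]
          simp only [hf']
          rw [abs_div, abs_neg, abs_of_nonneg hnum, abs_of_pos (by positivity : (0:ℝ) < (t ^ p + x) ^ 2)]
      _ ≤ g t := by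
          simp only [hg]
          rw [div_le_div_iff₀ (by positivity) (by positivity)]
          have hsq : (t ^ p / 2) * (t ^ p / 2) ≤ (t ^ p + x) * (t ^ p + x) :=
            mul_self_le_mul_self (by positivity) h1
          nlinarith [mul_le_mul_of_nonneg_left hsq hnum]
  have hifv : IntervalIntegrable (fun t => f' t * v t) MeasureTheory.volume a b := by
    rw [intervalIntegrable_iff_integrableOn_Icc_of_le hab]
    exact (hcf'.mul hcv.continuousOn).integrableOn_Icc
  have hrem : |∫ t in a..b, f' t * v t| ≤ 4 / a ^ p := by
    calc |∫ t in a..b, f' t * v t| ≤ ∫ t in a..b, |f' t| * |v t| := by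
          simpa [Real.norm_eq_abs, abs_mul] using
            intervalIntegral.norm_integral_le_integral_norm (f := fun t => f' t * v t)
              (μ := MeasureTheory.volume) hab
      _ ≤ ∫ t in a..b, g t := by
          apply integral_mono_on hab _ hig hptw
          rw [intervalIntegrable_iff_integrableOn_Icc_of_le hab]
          exact (hcf'.abs.mul hcv.continuousOn.abs).integrableOn_Icc
      _ = -4 * (b ^ p)⁻¹ - -4 * (a ^ p)⁻¹ := hgint
      _ ≤ 4 / a ^ p := by
          have hbp : 0 < b ^ p := pow_pos (lt_of_lt_of_le ha0 hab) p
          have : (0:ℝ) ≤ (b ^ p)⁻¹ := by positivity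
          rw [div_eq_mul_inv]
          nlinarith
  -- combine
  have hbb := hbd b ⟨hab, le_refl b⟩
  have hba := hbd a ⟨le_refl a, hab⟩
  calc |∫ u in a..b, Real.cos (u ^ (p + 1) / (p + 1) + x * u)|
      = |f b * v b - f a * v a - ∫ t in a..b, f' t * v t| := by rw [hcong, hibp]
    _ ≤ |f b * v b| + |f a * v a| + |∫ t in a..b, f' t * v t| := by
        calc |f b * v b - f a * v a - ∫ t in a..b, f' t * v t|
            ≤ |f b * v b - f a * v a| + |∫ t in a..b, f' t * v t| := abs_sub _ _
          _ ≤ |f b * v b| + |f a * v a| + |∫ t in a..b, f' t * v t| := by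
              have := abs_sub (f b * v b) (f a * v a)
              linarith
    _ ≤ 2 / a ^ p + 2 / a ^ p + 4 / a ^ p := by linarith
    _ = 8 / a ^ p := by ring

/-- For even `p ≥ 2` and `x ∈ ℝ`, the truncated integrals
`(1/π) ∫₀^T cos(u^{p+1}/(p+1)+xu) du` converge to `Ai_p(x)` as `T → ∞`, with error
`O(T^{-p})`: there are constants `C > 0` and `C_x > 0` such that for all
`T > (C|x|)^{1/p}` the difference is at most `C_x / T^p`. -/
theorem pAiry_truncation_rate (p : ℕ) (hp : 2 ≤ p) (hpe : Even p) (x : ℝ) :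
    ∃ A : ℝ,
      Tendsto (fun T : ℝ =>
          (1 / Real.pi) * ∫ u in (0:ℝ)..T, Real.cos (u ^ (p + 1) / (p + 1) + x * u))
        atTop (nhds A) ∧
      ∃ C : ℝ, 0 < C ∧ ∃ Cx : ℝ, 0 < Cx ∧
        ∀ T : ℝ, (C * |x|) ^ ((1:ℝ) / p) < T →
          |A - (1 / Real.pi) * ∫ u in (0:ℝ)..T, Real.cos (u ^ (p + 1) / (p + 1) + x * u)| ≤
            Cx / T ^ p := by
  set F : ℝ → ℝ := fun T => ∫ u in (0:ℝ)..T, Real.cos (u ^ (p + 1) / (p + 1) + x * u) with hFdef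
  set M : ℝ := (2 * |x|) ^ ((1:ℝ)/p) with hM
  have hcont : Continuous fun u : ℝ => Real.cos (u ^ (p + 1) / (p + 1) + x * u) := by fun_prop
  have hdiff : ∀ a b : ℝ, M < a → a ≤ b → |F b - F a| ≤ 8 / a ^ p := by
    intro a b ha hab
    have h1 := integral_add_adjacent_intervals
      (hcont.intervalIntegrable (μ := MeasureTheory.volume) 0 a) (hcont.intervalIntegrable a b)
    have h2 := tail_bound p hp x a b ha hab
    have h3 : F b - F a = ∫ u in a..b, Real.cos (u ^ (p + 1) / (p + 1) + x * u) := by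
      simp only [hFdef]
      linarith [h1]
    rw [h3]; exact h2
  have hpos : Tendsto (fun T : ℝ => 8 / T ^ p) atTop (nhds 0) :=
    Tendsto.div_atTop tendsto_const_nhds (tendsto_pow_atTop (by omega))
  have hcauchy : CauchySeq F := by
    rw [Metric.cauchySeq_iff']
    intro ε hε
    have hev := hpos.eventually_lt_const hε
    rw [eventually_atTop] at hev
    obtain ⟨N0, hN0⟩ := hev
    refine ⟨max N0 (M + 1), ?_⟩
    intro n hn
    have h1 : M < max N0 (M + 1) := lt_of_lt_of_le (lt_add_one M) (le_max_right _ _)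
    rw [Real.dist_eq]
    calc |F n - F (max N0 (M + 1))| ≤ 8 / (max N0 (M + 1)) ^ p := hdiff _ _ h1 hn
      _ < ε := hN0 _ (le_max_left _ _)
  obtain ⟨A0, hA0⟩ := cauchySeq_tendsto_of_complete hcauchy
  have hpi : 0 < Real.pi := Real.pi_pos
  refine ⟨(1 / Real.pi) * A0, hA0.const_mul _, 2, two_pos, 8 / Real.pi, by positivity, ?_⟩
  intro T hT
  have hT' : M < T := hT
  have hT0 : 0 < T := lt_of_le_of_lt (Real.rpow_nonneg (by positivity) _) hT'
  have hlim : |A0 - F T| ≤ 8 / T ^ p := by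
    apply le_of_tendsto ((hA0.sub tendsto_const_nhds).abs)
    rw [eventually_atTop]
    exact ⟨T, fun S hS => hdiff T S hT' hS⟩
  calc |(1 / Real.pi) * A0 - (1 / Real.pi) * F T|
      = (1 / Real.pi) * |A0 - F T| := by
        rw [← mul_sub, abs_mul, abs_of_pos (by positivity : (0:ℝ) < 1 / Real.pi)]
    _ ≤ (1 / Real.pi) * (8 / T ^ p) := by
        apply mul_le_mul_of_nonneg_left hlim (by positivity)
    _ = (8 / Real.pi) / T ^ p := by ring
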